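/- Let G be a connected simple graph on a finite vertex set V with n = |V| ≥ 2 vertices and suppose w is a nonnegative curvature vector for G. Then ‖w‖₁ ≥ n²/((n−1)·diam(G)), with equality if and only if G is the complete graph on V. -/

import Mathlib

/-- Reverse Bonnet-Myers: if `w` is a nonnegative curvature vector for a connected
graph `G` on `n ≥ 2` vertices, then `‖w‖₁ ≥ n² / ((n-1) · diam(G))`, with equality
if and only if `G` is the complete graph. -/
theorem reverse_bonnet_myers {V : Type*} [Fintype V] (G : SimpleGraph V)
    (hG : G.Connected) (hn : 2 ≤ Fintype.card V)
    (w : V → ℝ) (hw0 : ∀ v, 0 ≤ w v)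
    (hw : ∀ u : V, ∑ v : V, (G.dist u v : ℝ) * w v = (Fintype.card V : ℝ)) :
    (Fintype.card V : ℝ) ^ 2 / (((Fintype.card V : ℝ) - 1) * (G.diam : ℝ))
      ≤ ∑ v : V, w v ∧
    ((∑ v : V, w v =
        (Fintype.card V : ℝ) ^ 2 / (((Fintype.card V : ℝ) - 1) * (G.diam : ℝ)))
      ↔ G = ⊤) := by
  classical
  have hNontriv : Nontrivial V := Fintype.one_lt_card_iff_nontrivial.mp hn
  set n := Fintype.card V with hndef
  set N : ℝ := (n : ℝ) with hNdef
  have hN2 : (2 : ℝ) ≤ N := by rw [hNdef]; exact_mod_cast hn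
  -- ediam is finite
  have hne : G.ediam ≠ ⊤ := by
    obtain ⟨u, v, huv⟩ := SimpleGraph.exists_edist_eq_ediam_of_finite (G := G)
    rw [← huv]
    exact (SimpleGraph.edist_ne_top_iff_reachable).mpr (hG.preconnected u v)
  have hdist_le : ∀ u v : V, G.dist u v ≤ G.diam := fun u v =>
    SimpleGraph.dist_le_diam hne
  have hdiam_pos : 1 ≤ G.diam := by
    rcases Nat.eq_zero_or_pos G.diam with h | h
    · rcases SimpleGraph.diam_eq_zero.mp h with h' | h'
      · exact absurd h' hne
      · exact absurd hNontriv (not_nontrivial_iff_subsingleton.mpr h')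
    · exact h
  set D : ℝ := (G.diam : ℝ) with hDdef
  have hD1 : (1 : ℝ) ≤ D := by rw [hDdef]; exact_mod_cast hdiam_pos
  have hpos : 0 < (N - 1) * D := by nlinarith
  -- key double sum identity
  have key : ∑ v : V, (∑ u : V, (G.dist u v : ℝ)) * w v = N ^ 2 := by
    calc ∑ v : V, (∑ u : V, (G.dist u v : ℝ)) * w v
        = ∑ v : V, ∑ u : V, (G.dist u v : ℝ) * w v := by
          simp [Finset.sum_mul]
      _ = ∑ u : V, ∑ v : V, (G.dist u v : ℝ) * w v := Finset.sum_comm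
      _ = ∑ _u : V, N := by
          refine Finset.sum_congr rfl fun u _ => hw u
      _ = N ^ 2 := by
          simp [Finset.sum_const, Finset.card_univ, ← hndef]
          ring
  -- column bound
  have hcast : ((n - 1 : ℕ) : ℝ) = N - 1 := by
    have : (1 : ℕ) ≤ n := by omega
    push_cast [Nat.cast_sub this]
    ring
  have hcol : ∀ v : V, (∑ u : V, (G.dist u v : ℝ)) ≤ (N - 1) * D := by
    intro v
    have h0 : (G.dist v v : ℝ) = 0 := by simp [SimpleGraph.dist_self]
    rw [← Finset.sum_erase (f := fun u => (G.dist u v : ℝ)) Finset.univ h0]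
    have hb : ∀ u ∈ Finset.univ.erase v, (G.dist u v : ℝ) ≤ D := by
      intro u _
      rw [hDdef]
      exact_mod_cast hdist_le u v
    calc ∑ u ∈ Finset.univ.erase v, (G.dist u v : ℝ)
        ≤ (Finset.univ.erase v).card • D := Finset.sum_le_card_nsmul _ _ _ hb
      _ = (N - 1) * D := by
          rw [Finset.card_erase_of_mem (Finset.mem_univ v), Finset.card_univ,
            nsmul_eq_mul, hcast]
  set S : ℝ := ∑ v : V, w v with hSdef
  have hmain : N ^ 2 ≤ ((N - 1) * D) * S := by
    rw [← key, hSdef, Finset.mul_sum]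
    exact Finset.sum_le_sum fun v _ =>
      mul_le_mul_of_nonneg_right (hcol v) (hw0 v)
  have hineq : N ^ 2 / ((N - 1) * D) ≤ S := by
    rw [div_le_iff₀ hpos]
    linarith
  refine ⟨hineq, ?_, ?_⟩
  · -- equality → complete
    intro heq
    have heq' : ((N - 1) * D) * S = N ^ 2 := by
      rw [heq]
      field_simp
      exact div_self (ne_of_gt (by linarith))
    have hSpos : 0 < S := by nlinarith
    -- each term forced to equality
    have hzero : ∑ v : V, ((N - 1) * D - ∑ u : V, (G.dist u v : ℝ)) * w v = 0 := by
      have : ∑ v : V, ((N - 1) * D) * w v = N ^ 2 := by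
        rw [← Finset.mul_sum, ← hSdef, heq']
      calc ∑ v : V, ((N - 1) * D - ∑ u : V, (G.dist u v : ℝ)) * w v
          = ∑ v : V, (((N - 1) * D) * w v)
              - ∑ v : V, (∑ u : V, (G.dist u v : ℝ)) * w v := by
            rw [← Finset.sum_sub_distrib]
            refine Finset.sum_congr rfl fun v _ => by ring
        _ = 0 := by rw [this, key]; ring
    have hterm : ∀ v ∈ Finset.univ,
        ((N - 1) * D - ∑ u : V, (G.dist u v : ℝ)) * w v = 0 := by
      rw [← Finset.sum_eq_zero_iff_of_nonneg]
      · exact hzero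
      · intro v _
        exact mul_nonneg (by linarith [hcol v]) (hw0 v)
    -- find v with w v > 0
    have hex : ∃ v : V, 0 < w v := by
      by_contra h
      push_neg at h
      have : S = 0 := by
        rw [hSdef]
        exact Finset.sum_eq_zero fun v _ => le_antisymm (h v) (hw0 v)
      linarith
    obtain ⟨v, hv⟩ := hex
    have hcoleq : ∑ u : V, (G.dist u v : ℝ) = (N - 1) * D := by
      have := hterm v (Finset.mem_univ v)
      rcases mul_eq_zero.mp this with h | h
      · linarith
      · linarith
    -- all distances to v equal D
    have hall : ∀ u : V, u ≠ v → (G.dist u v : ℝ) = D := by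
      have h0 : (G.dist v v : ℝ) = 0 := by simp [SimpleGraph.dist_self]
      have hsum : ∑ u ∈ Finset.univ.erase v, (D - (G.dist u v : ℝ)) = 0 := by
        rw [Finset.sum_sub_distrib, Finset.sum_const,
          Finset.card_erase_of_mem (Finset.mem_univ v), Finset.card_univ,
          Finset.sum_erase (f := fun u => (G.dist u v : ℝ)) Finset.univ h0,
          hcoleq, nsmul_eq_mul, hcast]
        ring
      intro u hu
      have := (Finset.sum_eq_zero_iff_of_nonneg (fun x _ => by
        have hx : (G.dist x v : ℝ) ≤ D := by
          rw [hDdef]; exact_mod_cast hdist_le x v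
        linarith)).mp hsum u (Finset.mem_erase.mpr ⟨hu, Finset.mem_univ u⟩)
      linarith
    -- v has a neighbor, so D = 1
    obtain ⟨u, hu⟩ := exists_ne v
    have hnbr : ∃ b, G.Adj v b := by
      obtain ⟨p⟩ := hG.preconnected v u
      cases p with
      | nil => exact absurd rfl hu
      | cons h q => exact ⟨_, h⟩
    obtain ⟨b, hb⟩ := hnbr
    have hdiam1 : G.diam = 1 := by
      have hbv : b ≠ v := hb.ne'
      have hd1 : G.dist b v = 1 :=
        SimpleGraph.dist_eq_one_iff_adj.mpr hb.symm
      have h2 : (G.dist b v : ℝ) = D := hall b hbv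
      rw [hd1, hDdef] at h2
      exact_mod_cast h2.symm
    exact SimpleGraph.diam_eq_one.mp hdiam1
  · -- complete → equality
    intro h
    subst h
    have hD : D = 1 := by
      rw [hDdef, SimpleGraph.diam_top]
      norm_num
    have hcol' : ∀ v : V, ∑ u : V, ((⊤ : SimpleGraph V).dist u v : ℝ) = N - 1 := by
      intro v
      have h0 : (((⊤ : SimpleGraph V).dist v v : ℕ) : ℝ) = 0 := by
        simp [SimpleGraph.dist_self]
      rw [← Finset.sum_erase (f := fun u => (((⊤ : SimpleGraph V).dist u v : ℕ) : ℝ)) Finset.univ h0]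
      calc ∑ u ∈ Finset.univ.erase v, (((⊤ : SimpleGraph V).dist u v : ℕ) : ℝ)
          = ∑ _u ∈ Finset.univ.erase v, (1 : ℝ) := by
            refine Finset.sum_congr rfl fun u hu => ?_
            have hune : u ≠ v := (Finset.mem_erase.mp hu).1
            have : (⊤ : SimpleGraph V).dist u v = 1 :=
              SimpleGraph.dist_eq_one_iff_adj.mpr (by simp [hune])
            rw [this]; norm_num
        _ = N - 1 := by
            rw [Finset.sum_const, Finset.card_erase_of_mem (Finset.mem_univ v),
              Finset.card_univ, nsmul_eq_mul, hcast]
            ring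
    have : (N - 1) * S = N ^ 2 := by
      rw [← key, hSdef, Finset.mul_sum]
      exact Finset.sum_congr rfl fun v _ => by rw [hcol' v]
    rw [hD, mul_one, eq_div_iff (by linarith : N - 1 ≠ 0)]
    linarith [this]
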